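/- Fix T > 0. Then sup_{n≥0} P(R·(ρ_n − R) ∈ [−T,T]) = O(R^{−1}) as R → +∞; that is, there exist constants C > 0 and R_0 such that for all R ≥ R_0 and all n ≥ 0, P(R·(ρ_n − R) ∈ [−T,T]) ≤ C/R. -/

import Mathlib

open MeasureTheory ProbabilityTheory Filter Real

/-- `x^a e^{-x} ≤ a^a e^{-a}` for `a > 0`, `x ≥ 0`. -/
lemma aux_rpow_exp_le (a x : ℝ) (ha : 0 < a) (hx : 0 ≤ x) :
    x ^ a * Real.exp (-x) ≤ a ^ a * Real.exp (-a) := by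
  have h1 : x / a ≤ Real.exp (x / a - 1) := by
    have := Real.add_one_le_exp (x / a - 1); linarith
  have h2 : (x / a) ^ a ≤ (Real.exp (x / a - 1)) ^ a :=
    Real.rpow_le_rpow (div_nonneg hx ha.le) h1 ha.le
  rw [Real.div_rpow hx ha.le, ← Real.exp_mul] at h2
  have h3 : (x / a - 1) * a = x - a := by field_simp
  rw [h3] at h2
  have hapos : 0 < a ^ a := Real.rpow_pos_of_pos ha a
  rw [div_le_iff₀ hapos] at h2
  have h4 : x ^ a ≤ a ^ a * Real.exp (x - a) := by linarith
  calc x ^ a * Real.exp (-x) ≤ a ^ a * Real.exp (x - a) * Real.exp (-x) :=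
        mul_le_mul_of_nonneg_right h4 (Real.exp_nonneg _)
    _ = a ^ a * Real.exp (-a) := by
        rw [mul_assoc, ← Real.exp_add]; congr 2; ring

/-- Stirling lower bound: `√π ≤ stirlingSeq (n+1)`. -/
lemma aux_stirling_ge (n : ℕ) : Real.sqrt π ≤ Stirling.stirlingSeq (n + 1) := by
  have ht : Tendsto (Stirling.stirlingSeq ∘ Nat.succ) atTop (nhds (Real.sqrt π)) :=
    Stirling.tendsto_stirlingSeq_sqrt_pi.comp (Filter.tendsto_add_atTop_nat 1)
  exact Stirling.stirlingSeq'_antitone.le_of_tendsto ht n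

/-- `√(2n) (n/e)^n ≤ n!` for `n ≥ 1`. -/
lemma aux_factorial_lb (n : ℕ) (hn : 1 ≤ n) :
    Real.sqrt (2 * n) * ((n : ℝ) / Real.exp 1) ^ n ≤ (n.factorial : ℝ) := by
  obtain ⟨m, rfl⟩ : ∃ m, n = m + 1 := ⟨n - 1, (Nat.succ_pred_eq_of_pos hn).symm⟩
  have h := aux_stirling_ge m
  have hpos : 0 < Real.sqrt (2 * ((m + 1 : ℕ) : ℝ)) * (((m + 1 : ℕ) : ℝ) / Real.exp 1) ^ (m + 1) := by
    positivity
  have h1 : (1 : ℝ) ≤ Real.sqrt π := by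
    rw [show (1 : ℝ) = Real.sqrt 1 by simp]
    exact Real.sqrt_le_sqrt (by linarith [Real.pi_gt_three])
  unfold Stirling.stirlingSeq at h
  rw [le_div_iff₀ hpos] at h
  nlinarith [hpos]

/-- `(n+1/2)^(n+1/2) e^{-(n+1/2)} ≤ n!`. -/
lemma aux_peak_le (n : ℕ) :
    ((n : ℝ) + 1 / 2) ^ ((n : ℝ) + 1 / 2) * Real.exp (-((n : ℝ) + 1 / 2))
      ≤ (n.factorial : ℝ) := by
  rcases Nat.eq_zero_or_pos n with h0 | h1
  · subst h0
    have h1 : ((0 : ℝ) + 1 / 2) ^ ((0 : ℝ) + 1 / 2) ≤ 1 :=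
      Real.rpow_le_one (by norm_num) (by norm_num) (by norm_num)
    have h2 : Real.exp (-((0 : ℝ) + 1 / 2)) ≤ 1 := Real.exp_le_one_iff.mpr (by norm_num)
    have h3 : (0 : ℝ) ≤ ((0 : ℝ) + 1 / 2) ^ ((0 : ℝ) + 1 / 2) :=
      Real.rpow_nonneg (by norm_num) _
    simp only [Nat.factorial_zero, Nat.cast_one, Nat.cast_zero]
    nlinarith
  · set a : ℝ := (n : ℝ) + 1 / 2 with ha_def
    have hn1 : (1 : ℝ) ≤ (n : ℝ) := by exact_mod_cast h1
    have ha : 0 < a := by positivity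
    have hnpos : (0 : ℝ) < n := by linarith
    -- a^a = a^n * √a
    have e1 : a ^ a = a ^ n * Real.sqrt a := by
      rw [ha_def, Real.rpow_add ha, Real.rpow_natCast, Real.sqrt_eq_rpow]
    -- a^n ≤ n^n * exp(1/2)
    have e2 : a ^ n ≤ (n : ℝ) ^ n * Real.exp (1 / 2) := by
      have hb : a = (n : ℝ) * (1 + 1 / (2 * n)) := by field_simp [ha_def]; ring
      have hc : (1 + 1 / (2 * (n : ℝ))) ≤ Real.exp (1 / (2 * n)) := by
        have := Real.add_one_le_exp (1 / (2 * (n : ℝ))); linarith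
      have hd : (1 + 1 / (2 * (n : ℝ))) ^ n ≤ (Real.exp (1 / (2 * n))) ^ n :=
        pow_le_pow_left₀ (by positivity) hc n
      have he : (Real.exp (1 / (2 * (n : ℝ)))) ^ n = Real.exp (1 / 2) := by
        rw [← Real.exp_nat_mul]
        congr 1
        field_simp
      rw [hb, mul_pow]
      rw [he] at hd
      exact mul_le_mul_of_nonneg_left hd (by positivity)
    -- √a ≤ √(2n)
    have e3 : Real.sqrt a ≤ Real.sqrt (2 * n) := Real.sqrt_le_sqrt (by rw [ha_def]; linarith)
    have e4 : Real.exp (-a) = Real.exp (-(n : ℝ)) * Real.exp (-(1 / 2 : ℝ)) := by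
      rw [← Real.exp_add]; congr 1; rw [ha_def]; ring
    have key : a ^ a * Real.exp (-a) ≤ Real.sqrt (2 * n) * ((n : ℝ) / Real.exp 1) ^ n := by
      have hfin : ((n : ℝ) / Real.exp 1) ^ n = (n : ℝ) ^ n * Real.exp (-(n : ℝ)) := by
        rw [div_pow, Real.exp_one_pow, Real.exp_neg, div_eq_mul_inv]
      rw [e1, e4, hfin]
      have step : a ^ n * Real.sqrt a ≤ ((n : ℝ) ^ n * Real.exp (1 / 2)) * Real.sqrt (2 * n) :=
        mul_le_mul e2 e3 (Real.sqrt_nonneg _) (by positivity)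
      calc a ^ n * Real.sqrt a * (Real.exp (-(n : ℝ)) * Real.exp (-(1 / 2 : ℝ)))
          ≤ ((n : ℝ) ^ n * Real.exp (1 / 2)) * Real.sqrt (2 * n) *
            (Real.exp (-(n : ℝ)) * Real.exp (-(1 / 2 : ℝ))) :=
            mul_le_mul_of_nonneg_right step (by positivity)
        _ = Real.sqrt (2 * n) * ((n : ℝ) ^ n * Real.exp (-(n : ℝ))) *
            (Real.exp (1 / 2) * Real.exp (-(1 / 2 : ℝ))) := by ring
        _ = Real.sqrt (2 * n) * ((n : ℝ) ^ n * Real.exp (-(n : ℝ))) := by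
            rw [← Real.exp_add]; norm_num
    exact key.trans (aux_factorial_lb n h1)

/-- uniform density bound: `2 r^(2n+1) e^{-r²} / n! ≤ 2` for `r ≥ 0`. -/
lemma aux_density_le (n : ℕ) (r : ℝ) (hr : 0 ≤ r) :
    2 * r ^ (2 * n + 1) * Real.exp (-r ^ 2) / (n.factorial : ℝ) ≤ 2 := by
  have hfac : (0 : ℝ) < (n.factorial : ℝ) := by exact_mod_cast n.factorial_pos
  rw [div_le_iff₀ hfac]
  have hkey : r ^ (2 * n + 1) * Real.exp (-r ^ 2) ≤ (n.factorial : ℝ) := by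
    set a : ℝ := (n : ℝ) + 1 / 2 with ha_def
    have ha : 0 < a := by positivity
    have hx : (0 : ℝ) ≤ r ^ 2 := sq_nonneg r
    have hrw : r ^ (2 * n + 1) = (r ^ 2) ^ a := by
      have h2 : (r : ℝ) ^ 2 = r ^ (2 : ℝ) := by
        rw [show (2 : ℝ) = ((2 : ℕ) : ℝ) by norm_num, Real.rpow_natCast]
      rw [h2, ← Real.rpow_mul hr]
      have : (2 : ℝ) * a = ((2 * n + 1 : ℕ) : ℝ) := by rw [ha_def]; push_cast; ring
      rw [this, Real.rpow_natCast]
    calc r ^ (2 * n + 1) * Real.exp (-r ^ 2) = (r ^ 2) ^ a * Real.exp (-(r ^ 2)) := by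
          rw [hrw]
      _ ≤ a ^ a * Real.exp (-a) := aux_rpow_exp_le a (r ^ 2) ha hx
      _ ≤ (n.factorial : ℝ) := aux_peak_le n
  nlinarith [Real.exp_nonneg (-r ^ 2), pow_nonneg hr (2 * n + 1)]

/-- uniform smallness for the Ginibre ensemble:
`sup_n P(R (ρ_n − R) ∈ [−T, T]) = O(R^{−1})` as `R → +∞`. -/
theorem stmt16
    {Ω : Type*} [MeasureSpace Ω] [IsProbabilityMeasure (ℙ : Measure Ω)]
    (T : ℝ) (hT : 0 < T)
    (ρ : ℕ → Ω → ℝ)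
    (hρ_meas : ∀ n, Measurable (ρ n))
    (hρ_nonneg : ∀ n, ∀ ω, 0 ≤ ρ n ω)
    (hρ_indep : iIndepFun ρ ℙ)
    (hρ_law : ∀ n : ℕ, (ℙ : Measure Ω).map (ρ n) =
      volume.withDensity (fun r => ENNReal.ofReal
        (Set.indicator (Set.Ici (0 : ℝ))
          (fun r => 2 * r ^ (2 * n + 1) * Real.exp (-r ^ 2) / (Nat.factorial n)) r))) :
    ∃ C > (0 : ℝ), ∃ R₀ : ℝ, ∀ R : ℝ, R₀ ≤ R → ∀ n : ℕ,
      (ℙ {ω : Ω | R * (ρ n ω - R) ∈ Set.Icc (-T) T}).toReal ≤ C / R := by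
  refine ⟨4 * T, by linarith, 1, fun R hR n => ?_⟩
  have hRpos : (0 : ℝ) < R := by linarith
  set a : ℝ := R - T / R with ha_def
  set b : ℝ := R + T / R with hb_def
  have hset : {ω : Ω | R * (ρ n ω - R) ∈ Set.Icc (-T) T} = ρ n ⁻¹' Set.Icc a b := by
    ext ω
    simp only [Set.mem_setOf_eq, Set.mem_Icc, Set.mem_preimage]
    have hTR : T / R * R = T := div_mul_cancel₀ T hRpos.ne'
    have haR : a * R = R * R - T := by rw [ha_def]; rw [sub_mul, hTR]
    have hbR : b * R = R * R + T := by rw [hb_def]; rw [add_mul, hTR]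
    constructor
    · rintro ⟨h1, h2⟩
      constructor
      · rw [← mul_le_mul_iff_left₀ hRpos]; nlinarith [haR, h1]
      · rw [← mul_le_mul_iff_left₀ hRpos]; nlinarith [hbR, h2]
    · rintro ⟨h1, h2⟩
      have h1' := mul_le_mul_of_nonneg_right h1 hRpos.le
      have h2' := mul_le_mul_of_nonneg_right h2 hRpos.le
      constructor
      · nlinarith [haR, h1']
      · nlinarith [hbR, h2']
  rw [hset, ← Measure.map_apply (hρ_meas n) measurableSet_Icc, hρ_law n,
    withDensity_apply _ measurableSet_Icc]
  have hbound : ∫⁻ r in Set.Icc a b, ENNReal.ofReal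
      (Set.indicator (Set.Ici (0 : ℝ))
        (fun r => 2 * r ^ (2 * n + 1) * Real.exp (-r ^ 2) / (Nat.factorial n)) r)
      ≤ ∫⁻ _ in Set.Icc a b, (ENNReal.ofReal 2) := by
    apply lintegral_mono
    intro r
    dsimp only
    by_cases hr : r ∈ Set.Ici (0 : ℝ)
    · rw [Set.indicator_of_mem hr]
      exact ENNReal.ofReal_le_ofReal (aux_density_le n r hr)
    · rw [Set.indicator_of_notMem hr]
      simp
  have hvol : (volume (Set.Icc a b)) = ENNReal.ofReal (2 * (T / R)) := by
    rw [Real.volume_Icc]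
    congr 1
    rw [ha_def, hb_def]; ring
  have htotal : ∫⁻ _ in Set.Icc a b, (ENNReal.ofReal 2) ∂volume = ENNReal.ofReal (4 * T / R) := by
    rw [setLIntegral_const, hvol, ← ENNReal.ofReal_mul (by norm_num)]
    congr 1
    ring
  rw [htotal] at hbound
  have hC : (0 : ℝ) ≤ 4 * T / R := by positivity
  exact ENNReal.toReal_le_of_le_ofReal hC hbound
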